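/- Let P be a symmetric positive definite n×n real matrix with maximal eigenvalue λ, and let c > 0. Then there exists a unique θ ∈ (0, 1/λ) such that -log det(I - θP) + tr((I - θP)^{-1} - I) = c. -/

import Mathlib

open Matrix

private lemma stmt4_phi_lt {u v : ℝ} (hu : 0 < u) (huv : u < v) :
    -Real.log v + (v⁻¹ - 1) < -Real.log u + (u⁻¹ - 1) := by
  have h1 : Real.log u < Real.log v := Real.log_lt_log hu huv
  have h2 : v⁻¹ < u⁻¹ := inv_strictAnti₀ hu huv
  linarith

private lemma stmt4_phi_nonneg {u : ℝ} (hu : 0 < u) (hu1 : u ≤ 1) :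
    0 ≤ -Real.log u + (u⁻¹ - 1) := by
  have h1 : Real.log u ≤ 0 := Real.log_nonpos hu.le hu1
  have h2 : 1 ≤ u⁻¹ := (one_le_inv₀ hu).mpr hu1
  linarith

private lemma stmt4_matrix {n : ℕ} (P : Matrix (Fin n) (Fin n) ℝ) (hP : P.PosDef) (θ : ℝ)
    (hθ : ∀ i, 1 - θ * hP.1.eigenvalues i ≠ 0) :
    (1 - θ • P).det = ∏ i, (1 - θ * hP.1.eigenvalues i) ∧
    Matrix.trace ((1 - θ • P)⁻¹ - 1) = ∑ i, ((1 - θ * hP.1.eigenvalues i)⁻¹ - 1) := by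
  set U : Matrix (Fin n) (Fin n) ℝ := (hP.1.eigenvectorUnitary : Matrix (Fin n) (Fin n) ℝ)
    with hUdef
  have hU : U ∈ Matrix.unitaryGroup (Fin n) ℝ := hP.1.eigenvectorUnitary.2
  have hUs : U * star U = 1 := (Matrix.mem_unitaryGroup_iff).mp hU
  have hsU : star U * U = 1 := (Matrix.mem_unitaryGroup_iff').mp hU
  have hspec : P = U * diagonal hP.1.eigenvalues * star U := by
    have := hP.1.spectral_theorem
    simpa [Function.comp] using this
  have key : 1 - θ • P = U * diagonal (fun i => 1 - θ * hP.1.eigenvalues i) * star U := by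
    have hdiag : diagonal (fun i => 1 - θ * hP.1.eigenvalues i)
        = 1 - θ • diagonal hP.1.eigenvalues := by
      rw [← diagonal_one, ← diagonal_smul, ← diagonal_sub]
      rfl
    rw [hdiag, Matrix.mul_sub, Matrix.sub_mul, Matrix.mul_one, hUs,
      mul_smul_comm, smul_mul_assoc, ← hspec]
  have hdet : (1 - θ • P).det = ∏ i, (1 - θ * hP.1.eigenvalues i) := by
    rw [key, det_mul, det_mul, mul_comm, ← mul_assoc, ← det_mul, hsU, det_one, one_mul,
      det_diagonal]
  refine ⟨hdet, ?_⟩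
  have hDinv : (diagonal (fun i => 1 - θ * hP.1.eigenvalues i))⁻¹
      = diagonal (fun i => (1 - θ * hP.1.eigenvalues i)⁻¹) := by
    apply Matrix.inv_eq_right_inv
    rw [diagonal_mul_diagonal]
    have h2 : (fun i => (1 - θ * hP.1.eigenvalues i) * (1 - θ * hP.1.eigenvalues i)⁻¹)
        = fun _ => (1:ℝ) := funext fun i => mul_inv_cancel₀ (hθ i)
    rw [h2, diagonal_one]
  have hUinv : U⁻¹ = star U := inv_eq_left_inv hsU
  have hinv : (1 - θ • P)⁻¹ = U * diagonal (fun i => (1 - θ * hP.1.eigenvalues i)⁻¹) * star U := by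
    rw [key, Matrix.mul_inv_rev, Matrix.mul_inv_rev, hDinv, hUinv,
      inv_eq_left_inv hUs, ← mul_assoc]
  rw [hinv]
  have htr : Matrix.trace (U * diagonal (fun i => (1 - θ * hP.1.eigenvalues i)⁻¹) * star U)
      = Matrix.trace (diagonal (fun i => (1 - θ * hP.1.eigenvalues i)⁻¹)) := by
    rw [Matrix.trace_mul_cycle, hsU, one_mul]
  rw [trace_sub, htr, trace_diagonal, trace_one, Finset.sum_sub_distrib]
  simp

/-- For every c > 0 there is a unique θ ∈ (0, 1/λ) with
  -log det(I - θP) + tr((I - θP)⁻¹ - I) = c. -/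
theorem stmt_4 {n : ℕ} (P : Matrix (Fin n) (Fin n) ℝ) (hP : P.PosDef)
    (lam : ℝ) (hlam : IsGreatest (Set.range hP.1.eigenvalues) lam)
    (c : ℝ) (hc : 0 < c) :
    ∃! θ : ℝ, θ ∈ Set.Ioo 0 (1 / lam) ∧
      -Real.log ((1 - θ • P).det) + Matrix.trace ((1 - θ • P)⁻¹ - 1) = c := by
  set μ : Fin n → ℝ := hP.1.eigenvalues with hμ
  obtain ⟨i₀, hi₀⟩ := hlam.1
  have hμpos : ∀ i, 0 < μ i := fun i => hP.eigenvalues_pos i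
  have hμle : ∀ i, μ i ≤ lam := fun i => hlam.2 ⟨i, rfl⟩
  have hlampos : 0 < lam := hi₀ ▸ hμpos i₀
  -- positivity of 1 - θ μ i on [0, 1/lam)
  have hpos : ∀ θ ∈ Set.Ico (0:ℝ) (1/lam), ∀ i, 0 < 1 - θ * μ i := by
    intro θ hθ i
    have h1 : θ * μ i ≤ θ * lam := mul_le_mul_of_nonneg_left (hμle i) hθ.1
    have h2 : θ * lam < 1 := (lt_div_iff₀ hlampos).mp hθ.2
    nlinarith
  set f : ℝ → ℝ := fun θ => ∑ i, (-Real.log (1 - θ * μ i) + ((1 - θ * μ i)⁻¹ - 1)) with hf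
  -- the expression equals f on Ico 0 (1/lam)
  have hexpr : ∀ θ ∈ Set.Ico (0:ℝ) (1/lam),
      -Real.log ((1 - θ • P).det) + Matrix.trace ((1 - θ • P)⁻¹ - 1) = f θ := by
    intro θ hθ
    obtain ⟨hdet, htr⟩ := stmt4_matrix P hP θ (fun i => (hpos θ hθ i).ne')
    rw [hdet, htr, Real.log_prod (fun i _ => (hpos θ hθ i).ne')]
    simp only [hf, ← hμ]
    rw [Finset.sum_add_distrib, Finset.sum_neg_distrib]
  -- f is strictly monotone on Ico 0 (1/lam)
  have hmono : StrictMonoOn f (Set.Ico 0 (1/lam)) := by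
    intro x hx y hy hxy
    apply Finset.sum_lt_sum_of_nonempty (Finset.univ_nonempty_iff.mpr ⟨i₀⟩)
    intro i _
    exact stmt4_phi_lt (hpos y hy i) (by nlinarith [hμpos i])
  -- choose θ₀
  set θ₀ : ℝ := c / ((1 + c) * lam) with hθ₀
  have h1c : (0:ℝ) < 1 + c := by linarith
  have hθ₀pos : 0 < θ₀ := div_pos hc (by positivity)
  have hθ₀lt : θ₀ < 1 / lam := by
    rw [hθ₀, div_lt_div_iff₀ (by positivity) hlampos]
    nlinarith
  have hθ₀mem : θ₀ ∈ Set.Ico (0:ℝ) (1/lam) := ⟨hθ₀pos.le, hθ₀lt⟩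
  have hf0 : f 0 = 0 := by simp [hf]
  -- f θ₀ ≥ c
  have hterm : (1 - θ₀ * lam)⁻¹ - 1 = c := by
    have : θ₀ * lam = c / (1 + c) := by
      rw [hθ₀]; field_simp
    rw [this]
    have : 1 - c / (1 + c) = 1 / (1 + c) := by field_simp; ring
    rw [this]
    field_simp; ring
  have hfθ₀ : c ≤ f θ₀ := by
    have key : -Real.log (1 - θ₀ * μ i₀) + ((1 - θ₀ * μ i₀)⁻¹ - 1) ≤ f θ₀ :=
      Finset.single_le_sum
        (f := fun i => -Real.log (1 - θ₀ * μ i) + ((1 - θ₀ * μ i)⁻¹ - 1))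
        (fun i _ => stmt4_phi_nonneg (hpos θ₀ hθ₀mem i)
          (by nlinarith [mul_nonneg hθ₀pos.le (hμpos i).le])) (Finset.mem_univ i₀)
    have hlog : Real.log (1 - θ₀ * μ i₀) ≤ 0 :=
      Real.log_nonpos (hpos θ₀ hθ₀mem i₀).le
        (by nlinarith [mul_nonneg hθ₀pos.le (hμpos i₀).le])
    have hterm' : (1 - θ₀ * μ i₀)⁻¹ - 1 = c := by rw [hi₀]; exact hterm
    linarith
  -- continuity of f on Icc 0 θ₀
  have hcont : ContinuousOn f (Set.Icc 0 θ₀) := by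
    apply continuousOn_finset_sum
    intro i _
    have hsub : Set.Icc (0:ℝ) θ₀ ⊆ Set.Ico 0 (1/lam) := fun x hx =>
      ⟨hx.1, lt_of_le_of_lt hx.2 hθ₀lt⟩
    have h1 : ContinuousOn (fun θ : ℝ => 1 - θ * μ i) (Set.Icc 0 θ₀) := by fun_prop
    have hne : ∀ x ∈ Set.Icc (0:ℝ) θ₀, 1 - x * μ i ≠ 0 := fun x hx =>
      (hpos x (hsub hx) i).ne'
    exact ((h1.log hne).neg).add ((h1.inv₀ hne).sub continuousOn_const)
  -- IVT
  obtain ⟨θ, hθmem, hθeq⟩ := intermediate_value_Icc hθ₀pos.le hcont ⟨by rw [hf0]; exact hc.le, hfθ₀⟩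
  have hθne : θ ≠ 0 := by
    intro h; rw [h, hf0] at hθeq; exact hc.ne hθeq
  have hθIoo : θ ∈ Set.Ioo 0 (1/lam) :=
    ⟨lt_of_le_of_ne hθmem.1 (Ne.symm hθne), lt_of_le_of_lt hθmem.2 hθ₀lt⟩
  refine ⟨θ, ⟨hθIoo, by rw [hexpr θ ⟨hθIoo.1.le, hθIoo.2⟩, hθeq]⟩, ?_⟩
  rintro θ' ⟨hθ'Ioo, hθ'eq⟩
  have h1 : f θ' = c := by rw [← hexpr θ' ⟨hθ'Ioo.1.le, hθ'Ioo.2⟩, hθ'eq]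
  exact hmono.injOn ⟨hθ'Ioo.1.le, hθ'Ioo.2⟩ ⟨hθIoo.1.le, hθIoo.2⟩ (h1.trans hθeq.symm)
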